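/- Let M, L ≥ 1, n ≥ 1, R ≥ 1 be natural numbers, let Z be an M×M diagonal complex matrix, let w ∈ ℂ^M be the all-ones vector, and for each r ∈ {1,…,R} let A_r and B_r be M×M matrices, each of which is a product of three matrices of the form Σ_{l=0}^{L−1} a_l Z^l (i.e., polynomials of degree at most L−1 in Z). Let C be the M × n^R matrix whose columns, indexed by α ∈ {0,…,n−1}^R, are given by (Π_{r=1}^{R} A_r^{n−α_r} B_r^{α_r})·w. Then rank(C) ≤ 6n(L−1)R + 1, while the number of columns of C is n^R. -/

import Mathlib

set_option maxHeartbeats 1000000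

open Matrix Polynomial

private lemma sum_mulVec' {M : ℕ} {ι : Type*} (s : Finset ι)
    (f : ι → Matrix (Fin M) (Fin M) ℂ) (w : Fin M → ℂ) :
    (∑ i ∈ s, f i) *ᵥ w = ∑ i ∈ s, (f i) *ᵥ w := by
  ext j
  simp [Matrix.mulVec, dotProduct, Finset.sum_apply, Matrix.sum_apply, Finset.sum_mul]
  rw [Finset.sum_comm]

private lemma poly_of_sum {M L : ℕ} (Z : Matrix (Fin M) (Fin M) ℂ) (a : Fin L → ℂ) :
    ∃ p : ℂ[X], p.natDegree ≤ L - 1 ∧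
      (∑ l : Fin L, a l • Z ^ (l : ℕ)) = aeval Z p := by
  refine ⟨∑ l : Fin L, Polynomial.C (a l) * X ^ (l : ℕ), ?_, ?_⟩
  · refine Polynomial.natDegree_sum_le_of_forall_le _ _ fun l _ => ?_
    calc (Polynomial.C (a l) * X ^ (l : ℕ)).natDegree ≤ (l : ℕ) :=
          (Polynomial.natDegree_C_mul_le _ _).trans (by simp)
      _ ≤ L - 1 := by have := l.isLt; omega
  · simp [map_sum, _root_.map_mul, map_pow, Algebra.smul_def]

private lemma poly_of_list_prod {M : ℕ} (Z : Matrix (Fin M) (Fin M) ℂ) (e : ℕ) :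
    ∀ ms : List (Matrix (Fin M) (Fin M) ℂ),
      (∀ m ∈ ms, ∃ p : ℂ[X], p.natDegree ≤ e ∧ m = aeval Z p) →
      ∃ p : ℂ[X], p.natDegree ≤ e * ms.length ∧ ms.prod = aeval Z p
  | [], _ => ⟨1, by simp⟩
  | m :: ms, h => by
    obtain ⟨p, hp, hmp⟩ := h m List.mem_cons_self
    obtain ⟨q, hq, hmq⟩ := poly_of_list_prod Z e ms (fun x hx => h x (List.mem_cons_of_mem _ hx))
    refine ⟨p * q, ?_, by simp [hmp, hmq, _root_.map_mul]⟩
    calc (p * q).natDegree ≤ p.natDegree + q.natDegree := Polynomial.natDegree_mul_le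
      _ ≤ e + e * ms.length := add_le_add hp hq
      _ = e * (m :: ms).length := by simp [List.length_cons]; ring

/-- Rank bound for the Cadambe–Jafar precoding matrix over an `L`-tap multipath
channel.  `Z` is an `M×M` diagonal matrix, `w` the all-ones vector, and for each
`r ∈ {1,…,R}` the matrices `A_r`, `B_r` are products of three polynomials of degree
at most `L−1` in `Z`.  The matrix `C` whose columns, indexed by `α ∈ {0,…,n−1}^R`,
are `(Π_r A_r^{n−α_r} B_r^{α_r})·w` then has rank at most `6n(L−1)R + 1`, while its
number of columns is `n^R`. -/
theorem precoding_rank_bound (M L n R : ℕ) (hM : 1 ≤ M) (hL : 1 ≤ L) (hn : 1 ≤ n)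
    (hR : 1 ≤ R) (dg : Fin M → ℂ)
    (Z : Matrix (Fin M) (Fin M) ℂ) (hZ : Z = Matrix.diagonal dg)
    (A B : Fin R → Matrix (Fin M) (Fin M) ℂ)
    (hA : ∀ r, ∃ a b c : Fin L → ℂ,
      A r = (∑ l : Fin L, a l • Z ^ (l : ℕ)) * (∑ l : Fin L, b l • Z ^ (l : ℕ)) *
        (∑ l : Fin L, c l • Z ^ (l : ℕ)))
    (hB : ∀ r, ∃ a b c : Fin L → ℂ,
      B r = (∑ l : Fin L, a l • Z ^ (l : ℕ)) * (∑ l : Fin L, b l • Z ^ (l : ℕ)) *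
        (∑ l : Fin L, c l • Z ^ (l : ℕ)))
    (C : Matrix (Fin M) (Fin R → Fin n) ℂ)
    (hC : ∀ (j : Fin M) (α : Fin R → Fin n),
      C j α = ((((List.finRange R).map
          (fun r => A r ^ (n - (α r : ℕ)) * B r ^ ((α r : ℕ)))).prod)
        *ᵥ (fun _ => (1 : ℂ))) j) :
    C.rank ≤ 6 * n * (L - 1) * R + 1 ∧ Fintype.card (Fin R → Fin n) = n ^ R := by
  constructor
  · -- D := 3 * (L-1) * n * R
    set D : ℕ := 3 * (L - 1) * n * R with hD
    set w : Fin M → ℂ := fun _ => (1 : ℂ) with hw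
    set W : Submodule ℂ (Fin M → ℂ) :=
      Submodule.span ℂ (Set.range (fun k : Fin (D + 1) => (Z ^ (k : ℕ)) *ᵥ w)) with hW
    -- each A r and B r is aeval Z of a polynomial of degree ≤ 3(L-1)
    have hApoly : ∀ r, ∃ p : ℂ[X], p.natDegree ≤ 3 * (L - 1) ∧ A r = aeval Z p := by
      intro r
      obtain ⟨a, b, c, habc⟩ := hA r
      obtain ⟨p, hp, hpe⟩ := poly_of_sum Z a
      obtain ⟨q, hq, hqe⟩ := poly_of_sum Z b
      obtain ⟨s, hs, hse⟩ := poly_of_sum Z c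
      refine ⟨p * q * s, ?_, by simp [habc, hpe, hqe, hse, _root_.map_mul]⟩
      calc (p * q * s).natDegree ≤ (p*q).natDegree + s.natDegree := Polynomial.natDegree_mul_le
        _ ≤ (p.natDegree + q.natDegree) + s.natDegree :=
            Nat.add_le_add_right Polynomial.natDegree_mul_le _
        _ ≤ 3 * (L - 1) := by omega
    have hBpoly : ∀ r, ∃ p : ℂ[X], p.natDegree ≤ 3 * (L - 1) ∧ B r = aeval Z p := by
      intro r
      obtain ⟨a, b, c, habc⟩ := hB r
      obtain ⟨p, hp, hpe⟩ := poly_of_sum Z a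
      obtain ⟨q, hq, hqe⟩ := poly_of_sum Z b
      obtain ⟨s, hs, hse⟩ := poly_of_sum Z c
      refine ⟨p * q * s, ?_, by simp [habc, hpe, hqe, hse, _root_.map_mul]⟩
      calc (p * q * s).natDegree ≤ (p*q).natDegree + s.natDegree := Polynomial.natDegree_mul_le
        _ ≤ (p.natDegree + q.natDegree) + s.natDegree :=
            Nat.add_le_add_right Polynomial.natDegree_mul_le _
        _ ≤ 3 * (L - 1) := by omega
    -- each column lies in W
    have hcol : ∀ α : Fin R → Fin n, (fun j => C j α) ∈ W := by
      intro α
      -- the product matrix is a polynomial in Z of degree ≤ D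
      have hterm : ∀ m ∈ (List.finRange R).map
          (fun r => A r ^ (n - (α r : ℕ)) * B r ^ ((α r : ℕ))),
          ∃ p : ℂ[X], p.natDegree ≤ 3 * (L - 1) * n ∧ m = aeval Z p := by
        intro m hm
        simp only [List.mem_map, List.mem_finRange, true_and] at hm
        obtain ⟨r, rfl⟩ := hm
        obtain ⟨p, hp, hpe⟩ := hApoly r
        obtain ⟨q, hq, hqe⟩ := hBpoly r
        refine ⟨p ^ (n - (α r : ℕ)) * q ^ ((α r : ℕ)), ?_, by
          simp [hpe, hqe, _root_.map_mul, map_pow]⟩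
        calc (p ^ (n - (α r : ℕ)) * q ^ ((α r : ℕ))).natDegree
            ≤ (p ^ (n - (α r : ℕ))).natDegree + (q ^ ((α r : ℕ))).natDegree :=
              Polynomial.natDegree_mul_le
          _ ≤ (n - (α r : ℕ)) * p.natDegree + (α r : ℕ) * q.natDegree :=
              add_le_add (Polynomial.natDegree_pow_le) (Polynomial.natDegree_pow_le)
          _ ≤ (n - (α r : ℕ)) * (3 * (L - 1)) + (α r : ℕ) * (3 * (L - 1)) :=
              add_le_add (Nat.mul_le_mul_left _ hp) (Nat.mul_le_mul_left _ hq)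
          _ = ((n - (α r : ℕ)) + (α r : ℕ)) * (3 * (L - 1)) := by ring
          _ ≤ 3 * (L - 1) * n := by
              have : (α r : ℕ) ≤ n := le_of_lt (α r).isLt
              have hsum : (n - (α r : ℕ)) + (α r : ℕ) = n := Nat.sub_add_cancel this
              rw [hsum]; exact le_of_eq (Nat.mul_comm _ _)
      obtain ⟨p, hp, hpe⟩ := poly_of_list_prod Z (3 * (L - 1) * n) _ hterm
      have hplen : p.natDegree ≤ D := by
        refine hp.trans ?_
        simp [hD, List.length_map, List.length_finRange]
      have hcoleq : (fun j => C j α) = (aeval Z p) *ᵥ w := by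
        funext j
        rw [hC j α, hpe]
      rw [hcoleq, aeval_eq_sum_range' (lt_of_le_of_lt hplen (Nat.lt_succ_self D)) Z,
        sum_mulVec']
      simp only [Matrix.smul_mulVec]
      refine Submodule.sum_smul_mem W _ fun i hi => ?_
      rw [Finset.mem_range] at hi
      exact Submodule.subset_span ⟨⟨i, hi⟩, by simp [Matrix.smul_mulVec]⟩
    -- rank bound
    have hrange : LinearMap.range C.mulVecLin ≤ W := by
      rw [Matrix.range_mulVecLin]
      refine Submodule.span_le.2 ?_
      rintro _ ⟨α, rfl⟩
      exact hcol α
    have h1 : C.rank ≤ Module.finrank ℂ W := by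
      rw [Matrix.rank]
      exact Submodule.finrank_mono hrange
    have h2 : Module.finrank ℂ W ≤ D + 1 := by
      refine (finrank_span_le_card _).trans ?_
      rw [Set.toFinset_range]
      exact (Finset.card_image_le).trans (by simp)
    have h3 : D + 1 ≤ 6 * n * (L - 1) * R + 1 := by
      have : D ≤ 6 * n * (L - 1) * R := by
        rw [hD]; nlinarith [Nat.zero_le (n * (L-1) * R)]
      omega
    omega
  · simp [Fintype.card_fun]
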